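/- The Gaussian curvature of the Riemannian metric g = diag( (1−y)/(x(1−x)(2−x−y)), (1−x)/(y(1−y)(2−x−y)) ) on the open square (0,1)² equals K(x,y) = 1/(2−x−y); in particular K > 1/2 everywhere, so the metric has curvature bounded below away from zero. -/

import Mathlib

/-- The coefficient E of the variance metric. -/
noncomputable def Emetric (x y : ℝ) : ℝ := (1 - y) / (x * (1 - x) * (2 - x - y))

/-- The coefficient G of the variance metric. -/
noncomputable def Gmetric (x y : ℝ) : ℝ := (1 - x) / (y * (1 - y) * (2 - x - y))

lemma derivE (x y : ℝ) (hx : x ∈ Set.Ioo (0:ℝ) 1) (hy : y ∈ Set.Ioo (0:ℝ) 1) :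
    deriv (fun t => Emetric x t) y = -1 / (x * (2 - x - y)^2) := by
  obtain ⟨hx0, hx1⟩ := hx
  obtain ⟨hy0, hy1⟩ := hy
  have hs : 0 < 2 - x - y := by linarith
  have hne : x * (1 - x) * (2 - x - y) ≠ 0 := ne_of_gt (mul_pos (mul_pos hx0 (by linarith)) hs)
  have h1 : HasDerivAt (fun t : ℝ => 1 - t) (-1) y := by
    simpa using (hasDerivAt_id y).const_sub 1
  have h2 : HasDerivAt (fun t : ℝ => x * (1 - x) * (2 - x - t)) (x * (1 - x) * (-1)) y := by
    have h : HasDerivAt (fun t : ℝ => (2 - x) - t) (-1) y := by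
      simpa using (hasDerivAt_id y).const_sub (2 - x)
    have h' := h.const_mul (x * (1 - x))
    convert h' using 2 <;> ring
  have h := h1.div h2 hne
  have heq : deriv (fun t => Emetric x t) y =
      ((-1) * (x * (1 - x) * (2 - x - y)) - (1 - y) * (x * (1 - x) * (-1))) /
        (x * (1 - x) * (2 - x - y))^2 := by
    have := h.deriv
    simpa [Emetric, Pi.div_def] using this
  rw [heq]
  field_simp
  ring

lemma derivG (x y : ℝ) (hx : x ∈ Set.Ioo (0:ℝ) 1) (hy : y ∈ Set.Ioo (0:ℝ) 1) :
    deriv (fun t => Gmetric t y) x = -1 / (y * (2 - x - y)^2) := by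
  obtain ⟨hx0, hx1⟩ := hx
  obtain ⟨hy0, hy1⟩ := hy
  have hs : 0 < 2 - x - y := by linarith
  have hne : y * (1 - y) * (2 - x - y) ≠ 0 := ne_of_gt (mul_pos (mul_pos hy0 (by linarith)) hs)
  have h1 : HasDerivAt (fun t : ℝ => 1 - t) (-1) x := by
    simpa using (hasDerivAt_id x).const_sub 1
  have h2 : HasDerivAt (fun t : ℝ => y * (1 - y) * (2 - t - y)) (y * (1 - y) * (-1)) x := by
    have h : HasDerivAt (fun t : ℝ => (2 - y) - t) (-1) x := by
      simpa using (hasDerivAt_id x).const_sub (2 - y)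
    have h' := h.const_mul (y * (1 - y))
    have e : (fun t : ℝ => y * (1 - y) * (2 - t - y)) = fun t => y * (1 - y) * ((2 - y) - t) := by
      funext t; ring
    rw [e]; exact h'
  have h := h1.div h2 hne
  have heq : deriv (fun t => Gmetric t y) x =
      ((-1) * (y * (1 - y) * (2 - x - y)) - (1 - x) * (y * (1 - y) * (-1))) /
        (y * (1 - y) * (2 - x - y))^2 := by
    have := h.deriv
    simpa [Gmetric, Pi.div_def] using this
  rw [heq]
  field_simp
  ring

lemma sqrtEG (x y : ℝ) (hx : x ∈ Set.Ioo (0:ℝ) 1) (hy : y ∈ Set.Ioo (0:ℝ) 1) :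
    Real.sqrt (Emetric x y * Gmetric x y)
      = 1 / (Real.sqrt x * Real.sqrt y * (2 - x - y)) := by
  obtain ⟨hx0, hx1⟩ := hx
  obtain ⟨hy0, hy1⟩ := hy
  have hs : 0 < 2 - x - y := by linarith
  have hsx := Real.sqrt_pos.mpr hx0
  have hsy := Real.sqrt_pos.mpr hy0
  have hxx := Real.mul_self_sqrt hx0.le
  have hyy := Real.mul_self_sqrt hy0.le
  have hEG : Emetric x y * Gmetric x y
      = (1 / (Real.sqrt x * Real.sqrt y * (2 - x - y)))^2 := by
    have hrhs : (1 / (Real.sqrt x * Real.sqrt y * (2 - x - y)))^2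
        = 1 / (x * y * (2 - x - y)^2) := by
      rw [div_pow, one_pow, mul_pow, mul_pow, Real.sq_sqrt hx0.le, Real.sq_sqrt hy0.le]
    rw [hrhs]
    unfold Emetric Gmetric
    have h1 : (0:ℝ) < 1 - x := by linarith
    have h2 : (0:ℝ) < 1 - y := by linarith
    field_simp
  rw [hEG, Real.sqrt_sq (by positivity)]


lemma ratioE (x y : ℝ) (hx : x ∈ Set.Ioo (0:ℝ) 1) (hy : y ∈ Set.Ioo (0:ℝ) 1) :
    deriv (fun t => Emetric x t) y / Real.sqrt (Emetric x y * Gmetric x y)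
      = -(Real.sqrt y / (Real.sqrt x * (2 - x - y))) := by
  obtain ⟨hx0, hx1⟩ := hx
  obtain ⟨hy0, hy1⟩ := hy
  have hs : 0 < 2 - x - y := by linarith
  have hsx := Real.sqrt_pos.mpr hx0
  have hsy := Real.sqrt_pos.mpr hy0
  have hxx := Real.mul_self_sqrt hx0.le
  rw [derivE x y ⟨hx0, hx1⟩ ⟨hy0, hy1⟩, sqrtEG x y ⟨hx0, hx1⟩ ⟨hy0, hy1⟩]
  field_simp
  linear_combination (-1 : ℝ) * hxx

lemma ratioG (x y : ℝ) (hx : x ∈ Set.Ioo (0:ℝ) 1) (hy : y ∈ Set.Ioo (0:ℝ) 1) :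
    deriv (fun t => Gmetric t y) x / Real.sqrt (Emetric x y * Gmetric x y)
      = -(Real.sqrt x / (Real.sqrt y * (2 - x - y))) := by
  obtain ⟨hx0, hx1⟩ := hx
  obtain ⟨hy0, hy1⟩ := hy
  have hs : 0 < 2 - x - y := by linarith
  have hsx := Real.sqrt_pos.mpr hx0
  have hsy := Real.sqrt_pos.mpr hy0
  have hyy := Real.mul_self_sqrt hy0.le
  rw [derivG x y ⟨hx0, hx1⟩ ⟨hy0, hy1⟩, sqrtEG x y ⟨hx0, hx1⟩ ⟨hy0, hy1⟩]
  field_simp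
  linear_combination (-1 : ℝ) * hyy

lemma derivOuterE (x y : ℝ) (hx : x ∈ Set.Ioo (0:ℝ) 1) (hy : y ∈ Set.Ioo (0:ℝ) 1) :
    deriv (fun y' => deriv (fun t => Emetric x t) y'
        / Real.sqrt (Emetric x y' * Gmetric x y')) y
      = -((1 / (2 * Real.sqrt y) * (Real.sqrt x * (2 - x - y))
          + Real.sqrt y * Real.sqrt x) / (Real.sqrt x * (2 - x - y))^2) := by
  obtain ⟨hx0, hx1⟩ := hx
  obtain ⟨hy0, hy1⟩ := hy
  have hs : 0 < 2 - x - y := by linarith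
  have hsx := Real.sqrt_pos.mpr hx0
  have hev : (fun y' => deriv (fun t => Emetric x t) y'
        / Real.sqrt (Emetric x y' * Gmetric x y'))
      =ᶠ[nhds y] (fun y' => -(Real.sqrt y' / (Real.sqrt x * (2 - x - y')))) := by
    filter_upwards [isOpen_Ioo.mem_nhds (Set.mem_Ioo.mpr ⟨hy0, hy1⟩)] with y' hy'
    exact ratioE x y' ⟨hx0, hx1⟩ hy'
  rw [hev.deriv_eq]
  have hnum : HasDerivAt (fun y' : ℝ => Real.sqrt y') (1 / (2 * Real.sqrt y)) y :=
    Real.hasDerivAt_sqrt hy0.ne'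
  have hden : HasDerivAt (fun y' : ℝ => Real.sqrt x * (2 - x - y')) (-Real.sqrt x) y := by
    have h : HasDerivAt (fun y' : ℝ => (2 - x) - y') (-1) y := by
      simpa using (hasDerivAt_id y).const_sub (2 - x)
    have h' := h.const_mul (Real.sqrt x)
    rw [show -Real.sqrt x = Real.sqrt x * -1 by ring]
    exact h'
  have hd := (hnum.div hden (ne_of_gt (mul_pos hsx hs))).neg
  refine hd.deriv.trans ?_
  ring

lemma derivOuterG (x y : ℝ) (hx : x ∈ Set.Ioo (0:ℝ) 1) (hy : y ∈ Set.Ioo (0:ℝ) 1) :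
    deriv (fun x' => deriv (fun t => Gmetric t y) x'
        / Real.sqrt (Emetric x' y * Gmetric x' y)) x
      = -((1 / (2 * Real.sqrt x) * (Real.sqrt y * (2 - x - y))
          + Real.sqrt x * Real.sqrt y) / (Real.sqrt y * (2 - x - y))^2) := by
  obtain ⟨hx0, hx1⟩ := hx
  obtain ⟨hy0, hy1⟩ := hy
  have hs : 0 < 2 - x - y := by linarith
  have hsy := Real.sqrt_pos.mpr hy0
  have hev : (fun x' => deriv (fun t => Gmetric t y) x'
        / Real.sqrt (Emetric x' y * Gmetric x' y))
      =ᶠ[nhds x] (fun x' => -(Real.sqrt x' / (Real.sqrt y * (2 - x' - y)))) := by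
    filter_upwards [isOpen_Ioo.mem_nhds (Set.mem_Ioo.mpr ⟨hx0, hx1⟩)] with x' hx'
    exact ratioG x' y hx' ⟨hy0, hy1⟩
  rw [hev.deriv_eq]
  have hnum : HasDerivAt (fun x' : ℝ => Real.sqrt x') (1 / (2 * Real.sqrt x)) x :=
    Real.hasDerivAt_sqrt hx0.ne'
  have hden : HasDerivAt (fun x' : ℝ => Real.sqrt y * (2 - x' - y)) (-Real.sqrt y) x := by
    have h : HasDerivAt (fun x' : ℝ => (2 - y) - x') (-1) x := by
      simpa using (hasDerivAt_id x).const_sub (2 - y)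
    have h' := h.const_mul (Real.sqrt y)
    have e : (fun x' : ℝ => Real.sqrt y * (2 - x' - y)) = fun x' => Real.sqrt y * ((2 - y) - x') := by
      funext t; ring
    rw [e, show -Real.sqrt y = Real.sqrt y * -1 by ring]
    exact h'
  have hd := (hnum.div hden (ne_of_gt (mul_pos hsy hs))).neg
  refine hd.deriv.trans ?_
  ring

/-- the Gaussian curvature
K = -(1/(2√(EG)))·[(E_y/√(EG))_y + (G_x/√(EG))_x] of the metric diag(E,G) on
(0,1)² equals 1/(2-x-y), which is everywhere > 1/2. -/
theorem curvature_variance_metric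
    (x y : ℝ) (hx : x ∈ Set.Ioo (0 : ℝ) 1) (hy : y ∈ Set.Ioo (0 : ℝ) 1) :
    -(1 / (2 * Real.sqrt (Emetric x y * Gmetric x y))) *
      (deriv (fun y' => deriv (fun t => Emetric x t) y'
          / Real.sqrt (Emetric x y' * Gmetric x y')) y
       + deriv (fun x' => deriv (fun t => Gmetric t y) x'
          / Real.sqrt (Emetric x' y * Gmetric x' y)) x)
      = 1 / (2 - x - y) ∧
    1 / 2 < 1 / (2 - x - y) := by
  have hx0 := hx.1
  have hx1 := hx.2
  have hy0 := hy.1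
  have hy1 := hy.2
  have hs : 0 < 2 - x - y := by linarith
  constructor
  · rw [derivOuterE x y hx hy, derivOuterG x y hx hy, sqrtEG x y hx hy]
    have ha0 : 0 < Real.sqrt x := Real.sqrt_pos.mpr hx0
    have hb0 : 0 < Real.sqrt y := Real.sqrt_pos.mpr hy0
    have hax : Real.sqrt x ^ 2 = x := Real.sq_sqrt hx0.le
    have hby : Real.sqrt y ^ 2 = y := Real.sq_sqrt hy0.le
    set a := Real.sqrt x with ha
    set b := Real.sqrt y with hb
    rw [← hax, ← hby]
    have hs' : 0 < 2 - a ^ 2 - b ^ 2 := by rw [hax, hby]; linarith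
    field_simp
    ring
  · rw [div_lt_div_iff₀ (by norm_num) hs]
    linarith
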